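/- For any graph G and sampling distribution R, tr(M̂_R^{G□G}) ≥ (tr(M̂_R^G))². Consequently, if M̂_R^{G□G} = (1/n²)J for a graph G on n vertices, then tr(M̂^G) ≤ (n+1)/2, where M̂^G is the standard average mixing matrix. -/

import Mathlib

open Matrix MeasureTheory
open scoped Matrix Kronecker

noncomputable section

/-- The (real form of the) mixing matrix `M(t)` of the quantum walk on a graph with
spectral decomposition `A = ∑ r, θ r • E r`:
`M(t) = ∑ r, ∑ s, cos ((θ r - θ s) t) • (E r ∘ E s)`. -/
def mixingReal {n d : ℕ} (θ : Fin d → ℝ) (E : Fin d → Matrix (Fin n) (Fin n) ℝ)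
    (t : ℝ) : Matrix (Fin n) (Fin n) ℝ :=
  ∑ r, ∑ s, Real.cos ((θ r - θ s) * t) • (E r ⊙ E s)

/-- The average mixing matrix `M̂_R^G = E[M^G(R)]`. -/
def ammG {n d : ℕ} (θ : Fin d → ℝ) (E : Fin d → Matrix (Fin n) (Fin n) ℝ)
    (μ : Measure ℝ) : Matrix (Fin n) (Fin n) ℝ :=
  Matrix.of fun i j => ∫ t, mixingReal θ E t i j ∂μ

/-- The average mixing matrix `M̂_R^{G□G} = E[M^G(R) ⊗ M^G(R)]` of the Cartesian square. -/
def ammGG {n d : ℕ} (θ : Fin d → ℝ) (E : Fin d → Matrix (Fin n) (Fin n) ℝ)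
    (μ : Measure ℝ) : Matrix (Fin n × Fin n) (Fin n × Fin n) ℝ :=
  Matrix.of fun p q => ∫ t, (mixingReal θ E t ⊗ₖ mixingReal θ E t) p q ∂μ

lemma aux_integrable_of_bound {μ : Measure ℝ} [IsFiniteMeasure μ] {f : ℝ → ℝ}
    (hf : Continuous f) (C : ℝ) (h : ∀ t, |f t| ≤ C) : Integrable f μ :=
  (integrable_const C).mono' hf.aestronglyMeasurable
    (Filter.Eventually.of_forall fun t => by simpa using h t)

lemma mixingReal_apply {n d : ℕ} (θ : Fin d → ℝ) (E : Fin d → Matrix (Fin n) (Fin n) ℝ)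
    (t : ℝ) (i j : Fin n) :
    mixingReal θ E t i j = ∑ r, ∑ s, Real.cos ((θ r - θ s) * t) * ((E r ⊙ E s) i j) := by
  simp [mixingReal, Matrix.sum_apply, Matrix.smul_apply, smul_eq_mul]

lemma mixingReal_cont {n d : ℕ} (θ : Fin d → ℝ) (E : Fin d → Matrix (Fin n) (Fin n) ℝ)
    (i j : Fin n) : Continuous fun t => mixingReal θ E t i j := by
  simp only [mixingReal_apply]
  exact continuous_finset_sum _ fun r _ => continuous_finset_sum _ fun s _ =>
    ((Real.continuous_cos.comp (continuous_const.mul continuous_id)).mul continuous_const)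

lemma mixingReal_bound {n d : ℕ} (θ : Fin d → ℝ) (E : Fin d → Matrix (Fin n) (Fin n) ℝ)
    (t : ℝ) (i j : Fin n) :
    |mixingReal θ E t i j| ≤ ∑ r, ∑ s, |(E r ⊙ E s) i j| := by
  rw [mixingReal_apply]
  refine (Finset.abs_sum_le_sum_abs _ _).trans (Finset.sum_le_sum fun r _ =>
    (Finset.abs_sum_le_sum_abs _ _).trans (Finset.sum_le_sum fun s _ => ?_))
  rw [abs_mul]
  exact mul_le_of_le_one_left (abs_nonneg _) (Real.abs_cos_le_one _)

lemma mixingReal_integrable {n d : ℕ} (θ : Fin d → ℝ) (E : Fin d → Matrix (Fin n) (Fin n) ℝ)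
    (μ : Measure ℝ) [IsFiniteMeasure μ] (i j : Fin n) :
    Integrable (fun t => mixingReal θ E t i j) μ :=
  aux_integrable_of_bound (mixingReal_cont θ E i j) _ (fun t => mixingReal_bound θ E t i j)

lemma mixingReal_integrable_mul {n d : ℕ} (θ : Fin d → ℝ) (E : Fin d → Matrix (Fin n) (Fin n) ℝ)
    (μ : Measure ℝ) [IsFiniteMeasure μ] (i j k l : Fin n) :
    Integrable (fun t => mixingReal θ E t i j * mixingReal θ E t k l) μ := by
  refine aux_integrable_of_bound ((mixingReal_cont θ E i j).mul (mixingReal_cont θ E k l))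
    ((∑ r, ∑ s, |(E r ⊙ E s) i j|) * (∑ r, ∑ s, |(E r ⊙ E s) k l|)) (fun t => ?_)
  rw [abs_mul]
  exact mul_le_mul (mixingReal_bound θ E t i j) (mixingReal_bound θ E t k l)
    (abs_nonneg _) ((abs_nonneg _).trans (mixingReal_bound θ E t i j))

/-- for any graph `G` and sampling distribution `R`,
`tr (M̂_R^{G□G}) ≥ (tr M̂_R^G)²`; consequently, if `M̂_R^{G□G} = (1/n²) J`, then
`tr (M̂^G) ≤ (n+1)/2`, where `M̂^G = ∑ r, E r ∘ E r` is the standard average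
mixing matrix of `G`. -/
theorem trace_amm_cartesianSquare {n d : ℕ}
    (G : SimpleGraph (Fin n)) [DecidableRel G.Adj]
    (θ : Fin d → ℝ) (E : Fin d → Matrix (Fin n) (Fin n) ℝ)
    (hθ : Function.Injective θ)
    (hA : G.adjMatrix ℝ = ∑ r, θ r • E r)
    (hEsym : ∀ r, (E r).IsSymm)
    (horth : ∀ r s, E r * E s = if r = s then E r else 0)
    (hsum : ∑ r, E r = 1)
    (μ : Measure ℝ) [IsProbabilityMeasure μ] :
    ((ammG θ E μ).trace) ^ 2 ≤ (ammGG θ E μ).trace ∧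
      (ammGG θ E μ = ((1 : ℝ) / (n : ℝ) ^ 2) • (Matrix.of fun _ _ => (1 : ℝ)) →
        (∑ r, E r ⊙ E r).trace ≤ ((n : ℝ) + 1) / 2) := by
  classical
  set f : ℝ → ℝ := fun t => (mixingReal θ E t).trace with hf_def
  have int_f : Integrable f μ := by
    simp only [hf_def, Matrix.trace, Matrix.diag]
    exact integrable_finset_sum _ fun i _ => mixingReal_integrable θ E μ i i
  have f_sq : ∀ t : ℝ, f t ^ 2 = ∑ i, ∑ j, mixingReal θ E t i i * mixingReal θ E t j j := by
    intro t
    simp only [hf_def, Matrix.trace, Matrix.diag, sq, Finset.sum_mul_sum]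
  have int_f2 : Integrable (fun t => f t ^ 2) μ := by
    simp only [f_sq]
    exact integrable_finset_sum _ fun i _ => integrable_finset_sum _ fun j _ =>
      mixingReal_integrable_mul θ E μ i i j j
  have traceG : (ammG θ E μ).trace = ∫ t, f t ∂μ := by
    simp only [Matrix.trace, Matrix.diag, ammG, Matrix.of_apply, hf_def]
    rw [integral_finset_sum _ fun i _ => mixingReal_integrable θ E μ i i]
  have traceGG : (ammGG θ E μ).trace = ∫ t, f t ^ 2 ∂μ := by
    calc (ammGG θ E μ).trace
        = ∑ p : Fin n × Fin n, ∫ t, (mixingReal θ E t ⊗ₖ mixingReal θ E t) p p ∂μ := by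
          simp [Matrix.trace, Matrix.diag, ammGG]
      _ = ∫ t, ∑ p : Fin n × Fin n, (mixingReal θ E t ⊗ₖ mixingReal θ E t) p p ∂μ :=
          (integral_finset_sum _ fun p _ => by
            simpa [Matrix.kroneckerMap_apply] using
              mixingReal_integrable_mul θ E μ p.1 p.1 p.2 p.2).symm
      _ = ∫ t, f t ^ 2 ∂μ := by
          refine integral_congr_ae (Filter.Eventually.of_forall fun t => ?_)
          have h1 : ∑ p : Fin n × Fin n, (mixingReal θ E t ⊗ₖ mixingReal θ E t) p p
              = (mixingReal θ E t ⊗ₖ mixingReal θ E t).trace := by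
            simp [Matrix.trace, Matrix.diag]
          dsimp only
          rw [h1, Matrix.trace_kronecker]
          simp only [hf_def]
          ring
  have hCS : (∫ t, f t ∂μ) ^ 2 ≤ ∫ t, f t ^ 2 ∂μ := by
    set m := ∫ t, f t ∂μ with hm_def
    have h0 : 0 ≤ ∫ t, (f t - m) ^ 2 ∂μ := integral_nonneg fun t => sq_nonneg _
    have hrw : (fun t => (f t - m) ^ 2) = fun t => (f t ^ 2 - (2 * m) * f t) + m ^ 2 := by
      funext t; ring
    have intA : Integrable (fun t => f t ^ 2 - (2 * m) * f t) μ :=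
      int_f2.sub (int_f.const_mul _)
    rw [hrw, integral_add intA (integrable_const _),
      integral_sub int_f2 (int_f.const_mul _), integral_const_mul, integral_const,
      probReal_univ] at h0
    simp only [one_smul, ← hm_def] at h0
    nlinarith [h0]
  constructor
  · rw [traceG, traceGG]; exact hCS
  · intro h
    by_cases hn : n = 0
    · subst hn
      norm_num [Matrix.trace]
    · have hn' : ((n : ℝ)) ≠ 0 := Nat.cast_ne_zero.mpr hn
      have htr1 : (ammGG θ E μ).trace = 1 := by
        rw [h, Matrix.trace_smul]
        simp only [Matrix.trace, Matrix.diag, Matrix.of_apply, Finset.sum_const,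
          Finset.card_univ, Fintype.card_prod, Fintype.card_fin, nsmul_eq_mul, smul_eq_mul]
        field_simp
        norm_num
        ring
      have hm1 : (∫ t, f t ∂μ) ≤ 1 := by
        have h1 : (∫ t, f t ∂μ) ^ 2 ≤ 1 := by
          rw [← htr1, traceGG]
          exact hCS
        nlinarith [h1]
      have int_cos : ∀ a : ℝ, Integrable (fun t => Real.cos (a * t)) μ := fun a =>
        aux_integrable_of_bound
          (Real.continuous_cos.comp (continuous_const.mul continuous_id)) 1
          (fun t => Real.abs_cos_le_one _)
      have hif : ∫ t, f t ∂μ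
          = ∑ i, ∑ r, ∑ s, (∫ t, Real.cos ((θ r - θ s) * t) ∂μ) * ((E r ⊙ E s) i i) := by
        have hfi : ∀ t : ℝ, f t = ∑ i, ∑ r, ∑ s,
            Real.cos ((θ r - θ s) * t) * ((E r ⊙ E s) i i) := by
          intro t
          simp only [hf_def, Matrix.trace, Matrix.diag, mixingReal_apply]
        simp only [hfi]
        rw [integral_finset_sum _ fun i _ => integrable_finset_sum _ fun r _ =>
          integrable_finset_sum _ fun s _ => (int_cos _).mul_const _]
        refine Finset.sum_congr rfl fun i _ => ?_
        rw [integral_finset_sum _ fun r _ => integrable_finset_sum _ fun s _ =>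
          (int_cos _).mul_const _]
        refine Finset.sum_congr rfl fun r _ => ?_
        rw [integral_finset_sum _ fun s _ => (int_cos _).mul_const _]
        exact Finset.sum_congr rfl fun s _ => integral_mul_const _ _
      have hdiag : ∀ (r : Fin d) (i : Fin n), 0 ≤ E r i i := by
        intro r i
        have h2 : E r * E r = E r := by simpa using horth r r
        have h1 : E r i i = ∑ k, E r i k * E r i k := by
          conv_lhs => rw [← h2]
          rw [Matrix.mul_apply]
          exact Finset.sum_congr rfl fun k _ => by rw [(hEsym r).apply i k]
        rw [h1]
        exact Finset.sum_nonneg fun k _ => mul_self_nonneg _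
      have hd : ∀ (i : Fin n) (r s : Fin d), 0 ≤ (E r ⊙ E s) i i := fun i r s => by
        rw [Matrix.hadamard_apply]; exact mul_nonneg (hdiag r i) (hdiag s i)
      have hcos_diag : ∀ r : Fin d, (∫ t, Real.cos ((θ r - θ r) * t) ∂μ) = 1 := by
        intro r; simp [measure_univ]
      have hcos_lb : ∀ r s : Fin d, (-1 : ℝ) ≤ ∫ t, Real.cos ((θ r - θ s) * t) ∂μ := by
        intro r s
        have h1 : ∫ (_ : ℝ), (-1 : ℝ) ∂μ ≤ ∫ t, Real.cos ((θ r - θ s) * t) ∂μ :=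
          integral_mono (integrable_const (-1 : ℝ)) (int_cos (θ r - θ s))
            (fun t => Real.neg_one_le_cos _)
        simpa [measure_univ] using h1
      have hlow : ∑ i, ∑ r, ∑ s, (if r = s then (1 : ℝ) else -1) * ((E r ⊙ E s) i i)
          ≤ ∫ t, f t ∂μ := by
        rw [hif]
        refine Finset.sum_le_sum fun i _ => Finset.sum_le_sum fun r _ =>
          Finset.sum_le_sum fun s _ => ?_
        by_cases hrs : r = s
        · subst hrs; rw [if_pos rfl, hcos_diag]
        · rw [if_neg hrs]
          exact mul_le_mul_of_nonneg_right (hcos_lb r s) (hd i r s)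
      have hsum_rs : ∀ i : Fin n, ∑ r, ∑ s, ((E r ⊙ E s) i i) = 1 := by
        intro i
        have h1 : ∑ r, E r i i = 1 := by
          have := congrArg (fun M : Matrix (Fin n) (Fin n) ℝ => M i i) hsum
          simpa [Matrix.sum_apply, Matrix.one_apply] using this
        have h2 : ∑ r, ∑ s, ((E r ⊙ E s) i i) = (∑ r, E r i i) * (∑ s, E s i i) := by
          rw [Finset.sum_mul_sum]
          simp [Matrix.hadamard_apply]
        rw [h2, h1]; ring
      have hTr : (∑ r, E r ⊙ E r).trace = ∑ i, ∑ r, ((E r ⊙ E r) i i) := by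
        simp [Matrix.trace, Matrix.diag, Matrix.sum_apply]
      have hlhs : ∑ i, ∑ r, ∑ s, (if r = s then (1 : ℝ) else -1) * ((E r ⊙ E s) i i)
          = 2 * (∑ r, E r ⊙ E r).trace - n := by
        have hterm : ∀ (i : Fin n) (r s : Fin d),
            (if r = s then (1 : ℝ) else -1) * ((E r ⊙ E s) i i)
              = 2 * (if r = s then (E r ⊙ E s) i i else 0) - (E r ⊙ E s) i i := by
          intro i r s; split <;> ring
        have hite : ∀ (i : Fin n), ∑ r, ∑ s, (if r = s then ((E r ⊙ E s) i i) else 0)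
            = ∑ r, (E r ⊙ E r) i i := by
          intro i
          refine Finset.sum_congr rfl fun r _ => ?_
          rw [Finset.sum_ite_eq]
          simp
        calc ∑ i, ∑ r, ∑ s, (if r = s then (1 : ℝ) else -1) * ((E r ⊙ E s) i i)
            = ∑ i, (2 * (∑ r, (E r ⊙ E r) i i) - 1) := by
              refine Finset.sum_congr rfl fun i _ => ?_
              simp only [hterm, Finset.sum_sub_distrib, ← Finset.mul_sum, hite i, hsum_rs i]
          _ = 2 * (∑ i, ∑ r, (E r ⊙ E r) i i) - n := by
              rw [Finset.sum_sub_distrib, ← Finset.mul_sum]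
              simp [Finset.card_univ]
          _ = 2 * (∑ r, E r ⊙ E r).trace - n := by rw [hTr]
      rw [hlhs] at hlow
      linarith [hlow, hm1]


end
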